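/- Consider the Evaluator Machine for ◇_{[t1,t2]} α (with t1 ≤ t2) whose queue evolves as: at each time step prepend M at index 0; if α holds at the current time, set all cells in range [t1,t2] to ⊤ (when they exist); if α fails, set the cell at index t2 to ⊥ only if its current value is M. Then for all i ≥ t2+1: Q^i[t2+1] = ⊤ iff there exists j ∈ [i−t2−1+t1, i−1] with α true at time j in x, and Q^i[t2+1] = ⊥ otherwise. -/
import Mathlib

inductive Cell : Type
  | top : Cell
  | bot : Cell
  | maybe : Cell
deriving DecidableEq

def run (step : ℕ → List Cell → List Cell) : ℕ → List Cell
  | 0 => step 0 []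
  | i + 1 => step (i + 1) (run step i)

def setRange (a b : ℕ) (v : Cell) (q : List Cell) : List Cell :=
  q.mapIdx fun j c => if a ≤ j ∧ j ≤ b then v else c

def setIfMaybe (k : ℕ) (v : Cell) (q : List Cell) : List Cell :=
  q.mapIdx fun j c => if j = k ∧ c = Cell.maybe then v else c

def setRangeIfMaybe (a b : ℕ) (v : Cell) (q : List Cell) : List Cell :=
  q.mapIdx fun j c => if (a ≤ j ∧ j ≤ b) ∧ c = Cell.maybe then v else c

def diamondStep (α : ℕ → Bool) (t1 t2 : ℕ) (i : ℕ) (q : List Cell) : List Cell :=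
  let q' := Cell.maybe :: q
  if α i then setRange t1 t2 Cell.top q' else setIfMaybe t2 Cell.bot q'

/-- Auxiliary: whether the cell at index `k` at time `i` should be `⊤`. -/
def HasTop (α : ℕ → Bool) (t1 t2 i k : ℕ) : Prop :=
  ∃ j, i - k + t1 ≤ j ∧ j ≤ i ∧ j ≤ i - k + t2 ∧ α j = true

open Classical in
/-- Auxiliary: intended value of the cell at index `k` at time `i`. -/
noncomputable def cellVal (α : ℕ → Bool) (t1 t2 i k : ℕ) : Cell :=
  if HasTop α t1 t2 i k then Cell.top
  else if t2 ≤ k then Cell.bot else Cell.maybe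

lemma cellVal_top {α t1 t2 i k} (h : HasTop α t1 t2 i k) :
    cellVal α t1 t2 i k = Cell.top := by unfold cellVal; rw [if_pos h]

lemma cellVal_bot {α t1 t2 i k} (h : ¬ HasTop α t1 t2 i k) (h2 : t2 ≤ k) :
    cellVal α t1 t2 i k = Cell.bot := by unfold cellVal; rw [if_neg h, if_pos h2]

lemma cellVal_maybe {α t1 t2 i k} (h : ¬ HasTop α t1 t2 i k) (h2 : ¬ t2 ≤ k) :
    cellVal α t1 t2 i k = Cell.maybe := by unfold cellVal; rw [if_neg h, if_neg h2]

lemma cellVal_congr {α t1 t2 i k i' k'}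
    (hT : HasTop α t1 t2 i k ↔ HasTop α t1 t2 i' k') (hb : (t2 ≤ k) ↔ (t2 ≤ k')) :
    cellVal α t1 t2 i k = cellVal α t1 t2 i' k' := by
  by_cases h : HasTop α t1 t2 i' k'
  · rw [cellVal_top (hT.mpr h), cellVal_top h]
  · by_cases h2 : t2 ≤ k'
    · rw [cellVal_bot (fun x => h (hT.mp x)) (hb.mpr h2), cellVal_bot h h2]
    · rw [cellVal_maybe (fun x => h (hT.mp x)) (fun x => h2 (hb.mp x)),
        cellVal_maybe h h2]

lemma getElem?_mapIdx (l : List Cell) (f : ℕ → Cell → Cell) (k : ℕ) :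
    (l.mapIdx f)[k]? = (l[k]?).map (f k) := by
  rcases Nat.lt_or_ge k l.length with h | h
  · rw [List.getElem?_eq_getElem (by simpa using h), List.getElem?_eq_getElem h]
    simp [List.getElem_mapIdx]
  · rw [List.getElem?_eq_none (by simpa using h), List.getElem?_eq_none h]
    rfl

lemma run_getElem? (α : ℕ → Bool) (t1 t2 : ℕ) (h12 : t1 ≤ t2) :
    ∀ i k, k ≤ i →
      (run (diamondStep α t1 t2) i)[k]? = some (cellVal α t1 t2 i k) := by
  intro i
  induction i with
  | zero =>
    intro k hk
    interval_cases k
    simp only [run, diamondStep]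
    by_cases hα : α 0 = true
    · simp only [hα, if_true, setRange, getElem?_mapIdx, List.getElem?_cons_zero,
        Option.map_some]
      by_cases h1 : t1 = 0
      · rw [cellVal_top ⟨0, by omega, by omega, by omega, hα⟩, if_pos ⟨by omega, by omega⟩]
      · rw [cellVal_maybe (by rintro ⟨j, hj1, hj2, hj3, _⟩; omega) (by omega),
          if_neg (by omega)]
    · replace hα : α 0 = false := by simpa using hα
      have hT : ¬ HasTop α t1 t2 0 0 := by
        rintro ⟨j, hj1, hj2, hj3, hj4⟩
        have : j = 0 := by omega
        subst this; rw [hα] at hj4; exact absurd hj4 (by simp)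
      simp only [hα, Bool.false_eq_true, if_false, setIfMaybe, getElem?_mapIdx,
        List.getElem?_cons_zero, Option.map_some]
      by_cases h2 : t2 = 0
      · rw [cellVal_bot hT (by omega), if_pos (by simp [h2])]
      · rw [cellVal_maybe hT (by omega), if_neg (by simp [Ne.symm h2])]
  | succ i ih =>
    intro k hk
    have hq' : ∀ m : ℕ, m ≤ i + 1 →
        (Cell.maybe :: run (diamondStep α t1 t2) i)[m]? =
          some (if m = 0 then Cell.maybe else cellVal α t1 t2 i (m - 1)) := by
      intro m hm
      cases m with
      | zero => simp
      | succ m => simp [ih m (by omega)]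
    simp only [run, diamondStep]
    by_cases hα : α (i + 1) = true
    · simp only [hα, if_true, setRange, getElem?_mapIdx, hq' k hk, Option.map_some]
      by_cases hin : t1 ≤ k ∧ k ≤ t2
      · rw [if_pos hin, cellVal_top ⟨i + 1, by omega, by omega, by omega, hα⟩]
      · have hin' : k < t1 ∨ t2 < k := by
          by_contra h
          push_neg at h
          exact hin ⟨by omega, by omega⟩
        rw [if_neg hin]
        cases k with
        | zero =>
          rw [if_pos rfl, cellVal_maybe (by rintro ⟨j, hj1, hj2, hj3, _⟩; omega)
            (by omega)]
        | succ n =>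
          simp only [Nat.succ_ne_zero, if_false, Nat.add_sub_cancel]
          refine congrArg some (cellVal_congr ?_ (by omega)).symm
          constructor
          · rintro ⟨j, hj1, hj2, hj3, hj4⟩
            refine ⟨j, by omega, ?_, by omega, hj4⟩
            rcases Nat.lt_or_ge j (i + 1) with h | h
            · omega
            · exfalso; omega
          · rintro ⟨j, hj1, hj2, hj3, hj4⟩; exact ⟨j, by omega, by omega, by omega, hj4⟩
    · replace hα : α (i + 1) = false := by simpa using hα
      simp only [hα, Bool.false_eq_true, if_false, setIfMaybe, getElem?_mapIdx,
        hq' k hk, Option.map_some]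
      have hnew_of_old : 1 ≤ k → HasTop α t1 t2 i (k - 1) → HasTop α t1 t2 (i + 1) k := by
        rintro hk1 ⟨j, hj1, hj2, hj3, hj4⟩; exact ⟨j, by omega, by omega, by omega, hj4⟩
      have hold_of_new : 1 ≤ k → HasTop α t1 t2 (i + 1) k → HasTop α t1 t2 i (k - 1) := by
        rintro hk1 ⟨j, hj1, hj2, hj3, hj4⟩
        refine ⟨j, by omega, ?_, by omega, hj4⟩
        rcases Nat.lt_or_ge j (i + 1) with h | h
        · omega
        · exfalso
          have : j = i + 1 := by omega
          subst this; rw [hα] at hj4; exact absurd hj4 (by simp)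
      have hnew0 : k = 0 → ¬ HasTop α t1 t2 (i + 1) k := by
        rintro rfl ⟨j, hj1, hj2, hj3, hj4⟩
        have : j = i + 1 := by omega
        subst this; rw [hα] at hj4; exact absurd hj4 (by simp)
      by_cases hkt : k = t2
      · cases k with
        | zero =>
          have h1 : t1 = 0 := by omega
          rw [if_pos rfl, if_pos (by simp [← hkt]), cellVal_bot (hnew0 rfl) (by omega)]
        | succ n =>
          simp only [Nat.succ_ne_zero, if_false, Nat.add_sub_cancel]
          by_cases hT : HasTop α t1 t2 i n
          · rw [cellVal_top hT, cellVal_top (hnew_of_old (by omega) hT), if_neg (by simp)]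
          · have hTnew : ¬ HasTop α t1 t2 (i + 1) (n + 1) := fun h =>
              hT (hold_of_new (by omega) h)
            rw [cellVal_maybe hT (by omega), cellVal_bot hTnew (by omega),
              if_pos (by simp [← hkt])]
      · rw [if_neg (by intro h; exact hkt h.1)]
        cases k with
        | zero =>
          rw [if_pos rfl, cellVal_maybe (hnew0 rfl) (by omega)]
        | succ n =>
          simp only [Nat.succ_ne_zero, if_false, Nat.add_sub_cancel]
          refine congrArg some (cellVal_congr ?_ (by omega)).symm
          exact ⟨fun h => hold_of_new (by omega) h, fun h => hnew_of_old (by omega) h⟩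

/-- Correctness of the Diamond Evaluator Machine: for all `i ≥ t2 + 1`, the cell at
index `t2 + 1` equals `⊤` iff `α` holds at some time `j ∈ [i − t2 − 1 + t1, i − 1]`
(i.e. `x^{i−t2−1} ⊨ ◇_{[t1,t2]} α`), and equals `⊥` otherwise. -/
theorem diamond_EM_correct (α : ℕ → Bool) (t1 t2 : ℕ) (h12 : t1 ≤ t2)
    (i : ℕ) (hi : t2 + 1 ≤ i) :
    ((run (diamondStep α t1 t2) i)[t2 + 1]? = some Cell.top ↔
      ∃ j, i - t2 - 1 + t1 ≤ j ∧ j ≤ i - 1 ∧ α j = true) ∧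
    (¬ (∃ j, i - t2 - 1 + t1 ≤ j ∧ j ≤ i - 1 ∧ α j = true) →
      (run (diamondStep α t1 t2) i)[t2 + 1]? = some Cell.bot) := by
  rw [run_getElem? α t1 t2 h12 i (t2 + 1) hi]
  have hEq : HasTop α t1 t2 i (t2 + 1) ↔
      ∃ j, i - t2 - 1 + t1 ≤ j ∧ j ≤ i - 1 ∧ α j = true := by
    constructor
    · rintro ⟨j, hj1, hj2, hj3, hj4⟩; exact ⟨j, by omega, by omega, hj4⟩
    · rintro ⟨j, hj1, hj2, hj3⟩; exact ⟨j, by omega, by omega, by omega, hj3⟩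
  by_cases hT : ∃ j, i - t2 - 1 + t1 ≤ j ∧ j ≤ i - 1 ∧ α j = true
  · rw [cellVal_top (hEq.mpr hT)]
    exact ⟨⟨fun _ => hT, fun _ => rfl⟩, fun h => absurd hT h⟩
  · rw [cellVal_bot (fun h => hT (hEq.mp h)) (by omega)]
    exact ⟨⟨fun h => by simp at h, fun h => absurd h hT⟩, fun _ => rfl⟩
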